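/- Let [A] be an interval m×n matrix with entrywise bounds A̲ ≤ A ≤ Ā, let [b] = [b̲, b̄] be an interval vector in ℝ^m, let x_c ∈ ℝ^n and r ≥ 0. Then the cube {x ∈ ℝ^n : ‖x − x_c‖_∞ ≤ r} is contained in the tolerance solution set Σ_∀∃([A],[b]) if and only if there exist real numbers y_{ij} and z_{ij} (1 ≤ i ≤ m, 1 ≤ j ≤ n) such that for every i: Σ_j y_{ij} ≤ b̄_i and Σ_j z_{ij} ≥ b̲_i, and for every i, j: y_{ij} is at least each of the four products Ā_{ij}((x_c)_j + r), Ā_{ij}((x_c)_j − r), A̲_{ij}((x_c)_j + r), A̲_{ij}((x_c)_j − r), and z_{ij} is at most each of those same four products. -/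
import Mathlib


open Matrix Finset

lemma bilin_ub {a a1 a2 t t1 t2 y : ℝ} (h1 : a1 ≤ a) (h2 : a ≤ a2)
    (h3 : t1 ≤ t) (h4 : t ≤ t2)
    (c11 : a1 * t1 ≤ y) (c12 : a1 * t2 ≤ y) (c21 : a2 * t1 ≤ y) (c22 : a2 * t2 ≤ y) :
    a * t ≤ y := by
  rcases le_or_gt 0 a with ha | ha
  · rcases le_or_gt 0 t2 with ht | ht
    · nlinarith
    · nlinarith
  · rcases le_or_gt 0 t1 with ht | ht
    · nlinarith
    · nlinarith

lemma bilin_lb {a a1 a2 t t1 t2 z : ℝ} (h1 : a1 ≤ a) (h2 : a ≤ a2)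
    (h3 : t1 ≤ t) (h4 : t ≤ t2)
    (c11 : z ≤ a1 * t1) (c12 : z ≤ a1 * t2) (c21 : z ≤ a2 * t1) (c22 : z ≤ a2 * t2) :
    z ≤ a * t := by
  have h := bilin_ub (a := -a) (a1 := -a2) (a2 := -a1) (t := t) (t1 := t1) (t2 := t2)
    (y := -z) (by linarith) (by linarith) h3 h4
    (by nlinarith) (by nlinarith) (by nlinarith) (by nlinarith)
  nlinarith [h]

lemma exists_corner_max (a1 a2 t1 t2 : ℝ) :
    ∃ p q : ℝ, (p = a1 ∨ p = a2) ∧ (q = t1 ∨ q = t2) ∧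
      p * q = max (max (a2 * t2) (a2 * t1)) (max (a1 * t2) (a1 * t1)) := by
  rcases max_cases (max (a2 * t2) (a2 * t1)) (max (a1 * t2) (a1 * t1)) with ⟨h, _⟩ | ⟨h, _⟩
  · rcases max_cases (a2 * t2) (a2 * t1) with ⟨h2, _⟩ | ⟨h2, _⟩
    · exact ⟨a2, t2, Or.inr rfl, Or.inr rfl, by rw [h, h2]⟩
    · exact ⟨a2, t1, Or.inr rfl, Or.inl rfl, by rw [h, h2]⟩
  · rcases max_cases (a1 * t2) (a1 * t1) with ⟨h2, _⟩ | ⟨h2, _⟩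
    · exact ⟨a1, t2, Or.inl rfl, Or.inr rfl, by rw [h, h2]⟩
    · exact ⟨a1, t1, Or.inl rfl, Or.inl rfl, by rw [h, h2]⟩

lemma exists_corner_min (a1 a2 t1 t2 : ℝ) :
    ∃ p q : ℝ, (p = a1 ∨ p = a2) ∧ (q = t1 ∨ q = t2) ∧
      p * q = min (min (a2 * t2) (a2 * t1)) (min (a1 * t2) (a1 * t1)) := by
  rcases min_cases (min (a2 * t2) (a2 * t1)) (min (a1 * t2) (a1 * t1)) with ⟨h, _⟩ | ⟨h, _⟩
  · rcases min_cases (a2 * t2) (a2 * t1) with ⟨h2, _⟩ | ⟨h2, _⟩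
    · exact ⟨a2, t2, Or.inr rfl, Or.inr rfl, by rw [h, h2]⟩
    · exact ⟨a2, t1, Or.inr rfl, Or.inl rfl, by rw [h, h2]⟩
  · rcases min_cases (a1 * t2) (a1 * t1) with ⟨h2, _⟩ | ⟨h2, _⟩
    · exact ⟨a1, t2, Or.inl rfl, Or.inr rfl, by rw [h, h2]⟩
    · exact ⟨a1, t1, Or.inl rfl, Or.inl rfl, by rw [h, h2]⟩

/-- Linear-programming characterization (variable-center n-cube): the
sup-norm cube of radius `r` centered at `x_c` is contained in the tolerance solution
set `Σ_∀∃([A],[b])` iff there exist auxiliary variables `y i j`, `z i j` satisfying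
the stated linear constraints. -/
theorem cube_subset_tolerance_iff_lp
    {m n : ℕ} (Al Au : Matrix (Fin m) (Fin n) ℝ) (hA : ∀ i j, Al i j ≤ Au i j)
    (bl bu : Fin m → ℝ)
    (xc : Fin n → ℝ) (r : ℝ) (hr : 0 ≤ r) :
    {x : Fin n → ℝ | ∀ j, |x j - xc j| ≤ r} ⊆
      {x | ∀ A : Matrix (Fin m) (Fin n) ℝ,
        (∀ i j, Al i j ≤ A i j ∧ A i j ≤ Au i j) →
        ∀ i, bl i ≤ A.mulVec x i ∧ A.mulVec x i ≤ bu i} ↔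
    (∃ y z : Fin m → Fin n → ℝ,
      (∀ i, (∑ j, y i j) ≤ bu i) ∧
      (∀ i, bl i ≤ ∑ j, z i j) ∧
      (∀ i j, Au i j * (xc j + r) ≤ y i j ∧ Au i j * (xc j - r) ≤ y i j ∧
              Al i j * (xc j + r) ≤ y i j ∧ Al i j * (xc j - r) ≤ y i j) ∧
      (∀ i j, z i j ≤ Au i j * (xc j + r) ∧ z i j ≤ Au i j * (xc j - r) ∧
              z i j ≤ Al i j * (xc j + r) ∧ z i j ≤ Al i j * (xc j - r))) := by
  constructor
  · intro h
    refine ⟨fun i j => max (max (Au i j * (xc j + r)) (Au i j * (xc j - r)))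
              (max (Al i j * (xc j + r)) (Al i j * (xc j - r))),
            fun i j => min (min (Au i j * (xc j + r)) (Au i j * (xc j - r)))
              (min (Al i j * (xc j + r)) (Al i j * (xc j - r))), ?_, ?_, ?_, ?_⟩
    · intro i
      have hc : ∀ j, ∃ p q : ℝ, (p = Al i j ∨ p = Au i j) ∧
          (q = xc j - r ∨ q = xc j + r) ∧
          p * q = max (max (Au i j * (xc j + r)) (Au i j * (xc j - r)))
            (max (Al i j * (xc j + r)) (Al i j * (xc j - r))) := fun j =>
        exists_corner_max (Al i j) (Au i j) (xc j - r) (xc j + r)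
      choose p q hp hq hpq using hc
      have hqcube : (fun j => q j) ∈ {x : Fin n → ℝ | ∀ j, |x j - xc j| ≤ r} := by
        intro j
        show |q j - xc j| ≤ r
        rcases hq j with hq' | hq' <;> rw [hq', abs_le] <;> constructor <;> linarith
      have hAbounds : ∀ i' j, Al i' j ≤ (fun i' j => if i' = i then p j else Al i' j) i' j ∧
          (fun i' j => if i' = i then p j else Al i' j) i' j ≤ Au i' j := by
        intro i' j
        by_cases hi : i' = i
        · subst hi
          rcases hp j with hp' | hp' <;> simp [hp'] <;> exact hA _ _
        · simp [hi, hA]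
      have := (h hqcube (fun i' j => if i' = i then p j else Al i' j) hAbounds i).2
      have hsum : Matrix.mulVec (fun i' j => if i' = i then p j else Al i' j) (fun j => q j) i
          = ∑ j, max (max (Au i j * (xc j + r)) (Au i j * (xc j - r)))
              (max (Al i j * (xc j + r)) (Al i j * (xc j - r))) := by
        simp only [Matrix.mulVec, dotProduct]
        exact Finset.sum_congr rfl (fun j _ => by simp [hpq j])
      rw [hsum] at this
      exact this
    · intro i
      have hc : ∀ j, ∃ p q : ℝ, (p = Al i j ∨ p = Au i j) ∧
          (q = xc j - r ∨ q = xc j + r) ∧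
          p * q = min (min (Au i j * (xc j + r)) (Au i j * (xc j - r)))
            (min (Al i j * (xc j + r)) (Al i j * (xc j - r))) := fun j =>
        exists_corner_min (Al i j) (Au i j) (xc j - r) (xc j + r)
      choose p q hp hq hpq using hc
      have hqcube : (fun j => q j) ∈ {x : Fin n → ℝ | ∀ j, |x j - xc j| ≤ r} := by
        intro j
        show |q j - xc j| ≤ r
        rcases hq j with hq' | hq' <;> rw [hq', abs_le] <;> constructor <;> linarith
      have hAbounds : ∀ i' j, Al i' j ≤ (fun i' j => if i' = i then p j else Al i' j) i' j ∧
          (fun i' j => if i' = i then p j else Al i' j) i' j ≤ Au i' j := by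
        intro i' j
        by_cases hi : i' = i
        · subst hi
          rcases hp j with hp' | hp' <;> simp [hp'] <;> exact hA _ _
        · simp [hi, hA]
      have := (h hqcube (fun i' j => if i' = i then p j else Al i' j) hAbounds i).1
      have hsum : Matrix.mulVec (fun i' j => if i' = i then p j else Al i' j) (fun j => q j) i
          = ∑ j, min (min (Au i j * (xc j + r)) (Au i j * (xc j - r)))
              (min (Al i j * (xc j + r)) (Al i j * (xc j - r))) := by
        simp only [Matrix.mulVec, dotProduct]
        exact Finset.sum_congr rfl (fun j _ => by simp [hpq j])
      rw [hsum] at this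
      exact this
    · intro i j
      refine ⟨le_max_of_le_left (le_max_left _ _), le_max_of_le_left (le_max_right _ _),
        le_max_of_le_right (le_max_left _ _), le_max_of_le_right (le_max_right _ _)⟩
    · intro i j
      exact ⟨min_le_of_left_le (min_le_left _ _), min_le_of_left_le (min_le_right _ _),
        min_le_of_right_le (min_le_left _ _), min_le_of_right_le (min_le_right _ _)⟩
  · rintro ⟨y, z, hy, hz, hyc, hzc⟩ x hx A hAb i
    have hxj : ∀ j, xc j - r ≤ x j ∧ x j ≤ xc j + r := by
      intro j
      have := abs_le.mp (hx j)
      constructor <;> linarith [this.1, this.2]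
    have hmv : A.mulVec x i = ∑ j, A i j * x j := by
      simp [Matrix.mulVec, dotProduct]
    constructor
    · rw [hmv]
      refine le_trans (hz i) (Finset.sum_le_sum fun j _ => ?_)
      exact bilin_lb (hAb i j).1 (hAb i j).2 (hxj j).1 (hxj j).2
        (hzc i j).2.2.2 (hzc i j).2.2.1 (hzc i j).2.1 (hzc i j).1
    · rw [hmv]
      refine le_trans (Finset.sum_le_sum fun j _ => ?_) (hy i)
      exact bilin_ub (hAb i j).1 (hAb i j).2 (hxj j).1 (hxj j).2
        (hyc i j).2.2.2 (hyc i j).2.2.1 (hyc i j).2.1 (hyc i j).1
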